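/- There is a universal constant C such that for all n ∈ ℕ with n ≥ 1 and all x ∈ ℝ³ lying outside the union of the open Euclidean balls B(p_{i,n}, D/n²) around the subdivision midpoints, the Riemann sum ∑_i (D/n)³/|x - p_{i,n}| differs from the integral ∫_{y∈[-D,D]³} 1/|x-y| dy by at most C·D²/n. -/

import Mathlib

open MeasureTheory

/-- The closed cube `[-D,D]³ ⊆ ℝ³`. -/
def cube (D : ℝ) : Set (EuclideanSpace ℝ (Fin 3)) :=
  {y | ∀ i, y i ∈ Set.Icc (-D) D}

/-- The midpoint `p_{i,n}` of the subdivision box of side `D/n` indexed by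
`v ∈ (Fin (2n))³` (corresponding to integer coordinates `−n ≤ i,j,k < n`). -/
noncomputable def midpt (D : ℝ) (n : ℕ) (v : Fin (2 * n) × Fin (2 * n) × Fin (2 * n)) :
    EuclideanSpace ℝ (Fin 3) :=
  (WithLp.equiv 2 (Fin 3 → ℝ)).symm
    ![(((v.1 : ℕ) : ℝ) - n + 1 / 2) * (D / n),
      (((v.2.1 : ℕ) : ℝ) - n + 1 / 2) * (D / n),
      (((v.2.2 : ℕ) : ℝ) - n + 1 / 2) * (D / n)]

namespace Stmt2

open Metric Set Real

local notation "E3" => EuclideanSpace ℝ (Fin 3)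

lemma coord_abs_le_norm (z : E3) (i : Fin 3) : |z i| ≤ ‖z‖ := by
  rw [EuclideanSpace.norm_eq, ← Real.sqrt_sq_eq_abs]
  refine Real.sqrt_le_sqrt ?_
  have := Finset.single_le_sum (f := fun j => ‖z j‖ ^ 2)
    (fun j _ => by positivity) (Finset.mem_univ i)
  simpa [Real.norm_eq_abs, sq_abs] using this

lemma norm_le_two_mul (z : E3) {r : ℝ} (hr : 0 ≤ r) (h : ∀ i, |z i| ≤ r) : ‖z‖ ≤ 2 * r := by
  rw [EuclideanSpace.norm_eq]
  have h1 : ∑ i, ‖z i‖ ^ 2 ≤ 3 * r ^ 2 := by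
    have h2 : ∀ i, ‖z i‖ ^ 2 ≤ r ^ 2 := fun i => by
      rw [Real.norm_eq_abs]
      exact pow_le_pow_left₀ (abs_nonneg _) (h i) 2
    calc ∑ i, ‖z i‖ ^ 2 ≤ ∑ _i : Fin 3, r ^ 2 := Finset.sum_le_sum fun i _ => h2 i
    _ = 3 * r ^ 2 := by rw [Finset.sum_const]; norm_num
  calc Real.sqrt (∑ i, ‖z i‖ ^ 2) ≤ Real.sqrt ((2 * r) ^ 2) :=
        Real.sqrt_le_sqrt (by nlinarith)
  _ = 2 * r := Real.sqrt_sq (by positivity)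

lemma measurable_coord (i : Fin 3) : Measurable fun y : E3 => y i :=
  (measurable_pi_apply i).comp ((MeasurableEquiv.toLp 2 (Fin 3 → ℝ)).symm).measurable

lemma volume_coordSet (s : Fin 3 → Set ℝ) (hs : ∀ i, MeasurableSet (s i)) :
    volume {y : E3 | ∀ i, y i ∈ s i} = ∏ i, volume (s i) := by
  have h1 : {y : E3 | ∀ i, y i ∈ s i}
      = ((MeasurableEquiv.toLp 2 (Fin 3 → ℝ)).symm) ⁻¹' (Set.pi Set.univ s) := by
    ext y
    simp [MeasurableEquiv.coe_toLp_symm, Set.mem_pi]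
  rw [h1, (EuclideanSpace.volume_preserving_symm_measurableEquiv_toLp (Fin 3)).measure_preimage
    (MeasurableSet.univ_pi hs).nullMeasurableSet, volume_pi_pi]

lemma volume_hyper (i : Fin 3) (c : ℝ) : volume {y : E3 | y i = c} = 0 := by
  have h1 : {y : E3 | y i = c}
      = ((MeasurableEquiv.toLp 2 (Fin 3 → ℝ)).symm) ⁻¹' ((fun z : Fin 3 → ℝ => z i) ⁻¹' {c}) := by
    rfl
  rw [h1, (EuclideanSpace.volume_preserving_symm_measurableEquiv_toLp (Fin 3)).measure_preimage
    ((measurable_pi_apply i) (measurableSet_singleton c)).nullMeasurableSet]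
  rw [volume_pi]
  exact Measure.pi_hyperplane (fun _ : Fin 3 => (volume : Measure ℝ)) i c

lemma integrableOn_inv_pow_closedBall (k : ℕ) (hk1 : 1 ≤ k) (hk : k < 3) (R : ℝ)
    (hR : 0 < R) :
    IntegrableOn (fun y : E3 => (‖y‖ ^ k)⁻¹) (Metric.closedBall 0 R) := by
  have hmeas : Measurable fun y : E3 => (‖y‖ ^ k)⁻¹ := (measurable_norm.pow_const k).inv
  have hnn : ∀ y : E3, 0 ≤ (‖y‖ ^ k)⁻¹ := fun y => by positivity
  refine ⟨hmeas.aestronglyMeasurable, ?_⟩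
  rw [hasFiniteIntegral_iff_norm]
  have hre : ∀ y : E3, ENNReal.ofReal ‖(‖y‖ ^ k)⁻¹‖ = ENNReal.ofReal ((‖y‖ ^ k)⁻¹) := by
    intro y; rw [Real.norm_eq_abs, abs_of_nonneg (hnn y)]
  simp only [hre]
  rw [lintegral_eq_lintegral_meas_le _ (Filter.Eventually.of_forall hnn) hmeas.aemeasurable]
  have hsub : ∀ t : ℝ, 0 < t → {a : E3 | t ≤ (‖a‖ ^ k)⁻¹}
      ⊆ Metric.closedBall 0 (t ^ (-(k : ℝ)⁻¹)) := by
    intro t ht a ha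
    simp only [Set.mem_setOf_eq] at ha
    rw [Metric.mem_closedBall, dist_zero_right]
    rcases eq_or_lt_of_le (norm_nonneg a) with h0 | h0
    · rw [← h0]; positivity
    · have h1 : ‖a‖ ^ k ≤ t⁻¹ := by
        rw [← inv_inv (‖a‖ ^ k)]
        exact inv_anti₀ ht ha
      have h2 : (‖a‖ ^ k) ^ ((k : ℝ)⁻¹) ≤ (t⁻¹) ^ ((k : ℝ)⁻¹) :=
        Real.rpow_le_rpow (by positivity) h1 (by positivity)
      rwa [Real.pow_rpow_inv_natCast (norm_nonneg a) (by omega),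
        Real.inv_rpow ht.le, ← Real.rpow_neg ht.le] at h2
  have hmeas2 : ∀ t : ℝ, MeasurableSet {a : E3 | t ≤ (‖a‖ ^ k)⁻¹} := by
    intro t; exact measurableSet_le measurable_const hmeas
  have hrle : ∀ t : ℝ, (volume.restrict (Metric.closedBall (0:E3) R)) {a : E3 | t ≤ (‖a‖ ^ k)⁻¹}
      ≤ volume {a : E3 | t ≤ (‖a‖ ^ k)⁻¹} := by
    intro t; rw [Measure.restrict_apply (hmeas2 t)]
    exact measure_mono Set.inter_subset_left
  calc ∫⁻ t in Set.Ioi (0:ℝ),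
        (volume.restrict (Metric.closedBall (0:E3) R)) {a : E3 | t ≤ (‖a‖ ^ k)⁻¹}
      = (∫⁻ t in Set.Ioc (0:ℝ) 1,
          (volume.restrict (Metric.closedBall (0:E3) R)) {a : E3 | t ≤ (‖a‖ ^ k)⁻¹})
        + ∫⁻ t in Set.Ioi (1:ℝ),
          (volume.restrict (Metric.closedBall (0:E3) R)) {a : E3 | t ≤ (‖a‖ ^ k)⁻¹} := by
        rw [← lintegral_union measurableSet_Ioi (Set.Ioc_disjoint_Ioi le_rfl),
          Set.Ioc_union_Ioi_eq_Ioi zero_le_one]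
    _ < ⊤ := by
        rw [ENNReal.add_lt_top]
        constructor
        · calc ∫⁻ t in Set.Ioc (0:ℝ) 1,
              (volume.restrict (Metric.closedBall (0:E3) R)) {a : E3 | t ≤ (‖a‖ ^ k)⁻¹}
              ≤ ∫⁻ _t in Set.Ioc (0:ℝ) 1, volume (Metric.closedBall (0:E3) R) := by
                refine lintegral_mono fun t => ?_
                refine le_trans (measure_mono (Set.subset_univ _)) ?_
                rw [Measure.restrict_apply_univ]
          _ = volume (Metric.closedBall (0:E3) R) * volume (Set.Ioc (0:ℝ) 1) :=
                setLIntegral_const _ _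
          _ < ⊤ := by
                apply ENNReal.mul_lt_top measure_closedBall_lt_top
                rw [Real.volume_Ioc]
                exact ENNReal.ofReal_lt_top
        · have hexp : -(3:ℝ)/(k:ℝ) < -1 := by
            rw [div_lt_iff₀ (by positivity : (0:ℝ) < (k:ℝ))]
            have : (k:ℝ) < 3 := by exact_mod_cast hk
            linarith
          calc ∫⁻ t in Set.Ioi (1:ℝ),
              (volume.restrict (Metric.closedBall (0:E3) R)) {a : E3 | t ≤ (‖a‖ ^ k)⁻¹}
              ≤ ∫⁻ t in Set.Ioi (1:ℝ),
                ENNReal.ofReal (t ^ (-(3:ℝ)/(k:ℝ))) * volume (Metric.ball (0:E3) 1) := by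
                refine setLIntegral_mono (by fun_prop) fun t ht => ?_
                have ht0 : (0:ℝ) < t := lt_trans one_pos ht
                refine le_trans (hrle t) ?_
                refine le_trans (measure_mono (hsub t ht0)) ?_
                rw [Measure.addHaar_closedBall _ _ (by positivity)]
                have h3 : (t ^ (-(k:ℝ)⁻¹)) ^ (Module.finrank ℝ (EuclideanSpace ℝ (Fin 3)))
                    = t ^ (-(3:ℝ)/(k:ℝ)) := by
                  rw [finrank_euclideanSpace_fin, ← Real.rpow_natCast (t ^ (-(k:ℝ)⁻¹)) 3,
                    ← Real.rpow_mul ht0.le]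
                  norm_num
                  rw [neg_div]
                  ring_nf
                rw [h3]
          _ = (∫⁻ t in Set.Ioi (1:ℝ), ENNReal.ofReal (t ^ (-(3:ℝ)/(k:ℝ))))
                * volume (Metric.ball (0:E3) 1) :=
                lintegral_mul_const' _ _ measure_ball_lt_top.ne
          _ < ⊤ := by
                refine ENNReal.mul_lt_top ?_ measure_ball_lt_top
                have hint : IntegrableOn (fun t : ℝ => t ^ (-(3:ℝ)/(k:ℝ))) (Set.Ioi 1) :=
                  integrableOn_Ioi_rpow_of_lt hexp one_pos
                have h2 := hint.2
                rw [hasFiniteIntegral_iff_norm] at h2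
                refine lt_of_le_of_lt (lintegral_mono fun t => ?_) h2
                exact ENNReal.ofReal_le_ofReal (le_abs_self _)

lemma preimage_subLeft (x : E3) (R : ℝ) :
    (fun y : E3 => x - y) ⁻¹' Metric.closedBall 0 R = Metric.closedBall x R := by
  ext y
  simp only [Set.mem_preimage, Metric.mem_closedBall, dist_zero_right, dist_eq_norm,
    norm_sub_rev y x, sub_zero]

lemma integrableOn_inv_pow (x : E3) (k : ℕ) (hk1 : 1 ≤ k) (hk : k < 3) {s : Set E3} {R : ℝ}
    (hR : 0 < R) (hs : s ⊆ Metric.closedBall x R) :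
    IntegrableOn (fun y : E3 => (‖x - y‖ ^ k)⁻¹) s := by
  refine IntegrableOn.mono_set ?_ hs
  have h := ((Measure.measurePreserving_sub_left (volume : Measure (EuclideanSpace ℝ (Fin 3))) x).integrableOn_comp_preimage
    (MeasurableEquiv.subLeft x).measurableEmbedding).2
    (integrableOn_inv_pow_closedBall k hk1 hk R hR)
  rw [preimage_subLeft] at h
  exact h

lemma integral_shift (x : E3) (R : ℝ) (F : E3 → ℝ) :
    ∫ y in Metric.closedBall x R, F (x - y) = ∫ z in Metric.closedBall 0 R, F z := by
  have h := (Measure.measurePreserving_sub_left (volume : Measure (EuclideanSpace ℝ (Fin 3))) x).setIntegral_preimage_emb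
    (MeasurableEquiv.subLeft x).measurableEmbedding F (Metric.closedBall 0 R)
  rw [preimage_subLeft] at h
  exact h

lemma ball_vol_le : (volume (Metric.ball (0:E3) 1)).toReal ≤ 8 := by
  have hsub : Metric.ball (0:E3) 1 ⊆ {y : E3 | ∀ i, y i ∈ Set.Icc (-1:ℝ) 1} := by
    intro y hy i
    have h1 := coord_abs_le_norm y i
    have h2 : |y i| ≤ 1 := le_trans h1 (le_of_lt (mem_ball_zero_iff.1 hy))
    exact ⟨neg_le_of_abs_le h2, le_of_abs_le h2⟩
  have hv : volume {y : E3 | ∀ i, y i ∈ Set.Icc (-1:ℝ) 1} = 8 := by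
    rw [volume_coordSet _ (fun _ => measurableSet_Icc)]
    simp only [Real.volume_Icc, Finset.prod_const, Finset.card_univ, Fintype.card_fin]
    rw [show (1:ℝ) - -1 = 2 by norm_num, ENNReal.ofReal_ofNat]
    norm_num
  have h3 := measure_mono (μ := (volume : Measure (EuclideanSpace ℝ (Fin 3)))) hsub
  rw [hv] at h3
  exact le_trans (ENNReal.toReal_mono (by norm_num) h3) (by norm_num)

lemma radial_eq (k : ℕ) (R : ℝ) :
    ∫ y in Metric.closedBall (0:E3) R, (‖y‖ ^ k)⁻¹
      = 3 * (volume (Metric.ball (0:E3) 1)).toReal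
        * ∫ t in Set.Ioc (0:ℝ) R, t ^ 2 * (t ^ k)⁻¹ := by
  have key := integral_fun_norm_addHaar (volume : Measure (EuclideanSpace ℝ (Fin 3)))
    (fun r : ℝ => Set.indicator (Set.Iic R) (fun r => (r ^ k)⁻¹) r)
  have hLHS : (fun x : E3 => Set.indicator (Set.Iic R) (fun r => (r ^ k)⁻¹) ‖x‖)
      = Set.indicator (Metric.closedBall 0 R) (fun x : E3 => (‖x‖ ^ k)⁻¹) := by
    funext x
    by_cases hx : ‖x‖ ≤ R
    · rw [Set.indicator_of_mem (Set.mem_Iic.2 hx),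
        Set.indicator_of_mem (mem_closedBall_zero_iff.2 hx)]
    · rw [Set.indicator_of_notMem (fun h => hx (Set.mem_Iic.1 h)),
        Set.indicator_of_notMem (fun h => hx (mem_closedBall_zero_iff.1 h))]
  rw [hLHS, integral_indicator measurableSet_closedBall] at key
  rw [key, finrank_euclideanSpace_fin]
  have hRHS : (fun t : ℝ => t ^ (3 - 1) • Set.indicator (Set.Iic R) (fun r => (r ^ k)⁻¹) t)
      = Set.indicator (Set.Iic R) (fun t => t ^ 2 * (t ^ k)⁻¹) := by
    funext t
    by_cases ht : t ∈ Set.Iic R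
    · rw [Set.indicator_of_mem ht, Set.indicator_of_mem ht, smul_eq_mul]
    · rw [Set.indicator_of_notMem ht, Set.indicator_of_notMem ht, smul_zero]
  rw [hRHS, setIntegral_indicator measurableSet_Iic, Set.Ioi_inter_Iic]
  rw [nsmul_eq_mul, smul_eq_mul]
  rw [measureReal_def]; ring

lemma setIntegral_inv_norm_le (x : E3) {R : ℝ} (hR : 0 ≤ R) :
    ∫ y in Metric.closedBall x R, ‖x - y‖⁻¹ ≤ 12 * R ^ 2 := by
  have h0 : ∫ y in Metric.closedBall x R, ‖x - y‖⁻¹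
      = ∫ z in Metric.closedBall (0:E3) R, (‖z‖ ^ 1)⁻¹ := by
    simp only [pow_one]
    exact integral_shift x R (fun z => ‖z‖⁻¹)
  rw [h0, radial_eq 1 R]
  have h1 : ∫ t in Set.Ioc (0:ℝ) R, t ^ 2 * (t ^ 1)⁻¹ = R ^ 2 / 2 := by
    rw [setIntegral_congr_fun measurableSet_Ioc
      (fun t ht => by
        have h : t ≠ 0 := ne_of_gt ht.1
        show t ^ 2 * (t ^ 1)⁻¹ = t
        field_simp)]
    rw [← intervalIntegral.integral_of_le hR, integral_id]
    ring
  rw [h1]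
  have hB0 : 0 ≤ (volume (Metric.ball (0:E3) 1)).toReal := ENNReal.toReal_nonneg
  nlinarith [ball_vol_le, sq_nonneg R]

lemma setIntegral_inv_sq_le (x : E3) {R : ℝ} (hR : 0 ≤ R) :
    ∫ y in Metric.closedBall x R, (‖x - y‖ ^ 2)⁻¹ ≤ 24 * R := by
  have h0 : ∫ y in Metric.closedBall x R, (‖x - y‖ ^ 2)⁻¹
      = ∫ z in Metric.closedBall (0:E3) R, (‖z‖ ^ 2)⁻¹ :=
    integral_shift x R (fun z => (‖z‖ ^ 2)⁻¹)
  rw [h0, radial_eq 2 R]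
  have h1 : ∫ t in Set.Ioc (0:ℝ) R, t ^ 2 * (t ^ 2)⁻¹ = R := by
    rw [setIntegral_congr_fun measurableSet_Ioc
      (fun t ht => by
        have h : t ≠ 0 := ne_of_gt ht.1
        show t ^ 2 * (t ^ 2)⁻¹ = 1
        field_simp)]
    simp [Real.volume_Ioc, ENNReal.toReal_ofReal hR, hR]
  rw [h1]
  have hB0 : 0 ≤ (volume (Metric.ball (0:E3) 1)).toReal := ENNReal.toReal_nonneg
  nlinarith [ball_vol_le]

def icoCube (D : ℝ) : Set (EuclideanSpace ℝ (Fin 3)) :=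
  {y | ∀ i, y i ∈ Set.Ico (-D) D}

def idx {n : ℕ} (v : Fin (2 * n) × Fin (2 * n) × Fin (2 * n)) : Fin 3 → ℕ :=
  ![(v.1 : ℕ), (v.2.1 : ℕ), (v.2.2 : ℕ)]

def box (D : ℝ) (n : ℕ) (v : Fin (2 * n) × Fin (2 * n) × Fin (2 * n)) : Set E3 :=
  {y | ∀ i, y i ∈ Set.Ico (((idx v i : ℝ) - n) * (D / n))
      (((idx v i : ℝ) - n) * (D / n) + D / n)}

lemma idx_lt {n : ℕ} (v : Fin (2 * n) × Fin (2 * n) × Fin (2 * n)) (i : Fin 3) :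
    idx v i < 2 * n := by
  fin_cases i
  · exact v.1.isLt
  · exact v.2.1.isLt
  · exact v.2.2.isLt

lemma midpt_coord (D : ℝ) (n : ℕ) (v : Fin (2 * n) × Fin (2 * n) × Fin (2 * n)) (i : Fin 3) :
    midpt D n v i = ((idx v i : ℝ) - n + 1 / 2) * (D / n) := by
  fin_cases i <;> simp [midpt, idx]

lemma measurableSet_coordSet (s : Fin 3 → Set ℝ) (hs : ∀ i, MeasurableSet (s i)) :
    MeasurableSet {y : E3 | ∀ i, y i ∈ s i} := by
  have h1 : {y : E3 | ∀ i, y i ∈ s i} = ⋂ i, (fun y : E3 => y i) ⁻¹' s i := by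
    ext y; simp [Set.mem_iInter]
  rw [h1]
  exact MeasurableSet.iInter fun i => (measurable_coord i) (hs i)

lemma box_measurableSet (D : ℝ) (n : ℕ) (v : Fin (2 * n) × Fin (2 * n) × Fin (2 * n)) :
    MeasurableSet (box D n v) :=
  measurableSet_coordSet _ (fun _ => measurableSet_Ico)

lemma icoCube_measurableSet (D : ℝ) : MeasurableSet (icoCube D) :=
  measurableSet_coordSet _ (fun _ => measurableSet_Ico)

lemma volume_box {D : ℝ} {n : ℕ} (hD : 0 < D) (hn : 1 ≤ n)
    (v : Fin (2 * n) × Fin (2 * n) × Fin (2 * n)) :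
    volume (box D n v) = ENNReal.ofReal (D / n) ^ 3 := by
  rw [show box D n v = {y : E3 | ∀ i, y i ∈ Set.Ico (((idx v i : ℝ) - n) * (D / n))
      (((idx v i : ℝ) - n) * (D / n) + D / n)} from rfl,
    volume_coordSet _ (fun _ => measurableSet_Ico)]
  simp only [Real.volume_Ico, add_sub_cancel_left]
  rw [Finset.prod_const, Finset.card_univ, Fintype.card_fin]

lemma volume_box_toReal {D : ℝ} {n : ℕ} (hD : 0 < D) (hn : 1 ≤ n)
    (v : Fin (2 * n) × Fin (2 * n) × Fin (2 * n)) :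
    (volume (box D n v)).toReal = (D / n) ^ 3 := by
  have hn0 : (0:ℝ) < n := by exact_mod_cast hn
  rw [volume_box hD hn v, ENNReal.toReal_pow, ENNReal.toReal_ofReal (by positivity)]

lemma iUnion_box {D : ℝ} {n : ℕ} (hD : 0 < D) (hn : 1 ≤ n) :
    (⋃ v : Fin (2 * n) × Fin (2 * n) × Fin (2 * n), box D n v) = icoCube D := by
  have hn0 : (0:ℝ) < n := by exact_mod_cast hn
  have hh0 : 0 < D / n := div_pos hD hn0
  have hnh : (n : ℝ) * (D / n) = D := by field_simp
  apply Set.Subset.antisymm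
  · rintro y ⟨_, ⟨v, rfl⟩, hy⟩
    intro i
    have h1 := hy i
    have h2 : (idx v i : ℝ) < 2 * n := by exact_mod_cast idx_lt v i
    have h3 : (0:ℝ) ≤ (idx v i : ℝ) := Nat.cast_nonneg _
    constructor
    · nlinarith [h1.1]
    · have h2' : (idx v i : ℝ) + 1 ≤ 2 * n := by
        have h2'' : idx v i + 1 ≤ 2 * n := idx_lt v i
        exact_mod_cast h2''
      have h4 : ((idx v i : ℝ) - n + 1) * (D / n) ≤ (n : ℝ) * (D / n) := by
        apply mul_le_mul_of_nonneg_right _ hh0.le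
        linarith
      calc y i < ((idx v i : ℝ) - n) * (D / n) + D / n := h1.2
      _ = ((idx v i : ℝ) - n + 1) * (D / n) := by ring
      _ ≤ (n : ℝ) * (D / n) := h4
      _ = D := hnh
  · intro y hy
    have hkey : ∀ i : Fin 3, ∃ m : ℕ, m < 2 * n ∧
        ((m : ℝ) - n) * (D / n) ≤ y i ∧ y i < ((m : ℝ) - n) * (D / n) + D / n := by
      intro i
      have h1 := (hy i).1
      have h2 := (hy i).2
      have ha0 : (0:ℝ) ≤ (y i + D) / (D / n) := by
        apply div_nonneg (by linarith) hh0.le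
      refine ⟨⌊(y i + D) / (D / n)⌋₊, ?_, ?_, ?_⟩
      · rw [Nat.floor_lt ha0, div_lt_iff₀ hh0]
        push_cast
        nlinarith
      · have := Nat.floor_le ha0
        rw [le_div_iff₀ hh0] at this
        nlinarith
      · have := Nat.lt_floor_add_one ((y i + D) / (D / n))
        rw [div_lt_iff₀ hh0] at this
        nlinarith
    choose m hm1 hm2 hm3 using hkey
    refine Set.mem_iUnion.2 ⟨(⟨m 0, hm1 0⟩, ⟨m 1, hm1 1⟩, ⟨m 2, hm1 2⟩), ?_⟩
    intro i
    have hidx : (idx (n := n) (⟨m 0, hm1 0⟩, ⟨m 1, hm1 1⟩, ⟨m 2, hm1 2⟩) i) = m i := by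
      fin_cases i <;> rfl
    rw [hidx]
    exact ⟨hm2 i, hm3 i⟩

lemma box_disjoint {D : ℝ} {n : ℕ} (hD : 0 < D) (hn : 1 ≤ n) :
    Pairwise (Function.onFun Disjoint (box D n)) := by
  have hn0 : (0:ℝ) < n := by exact_mod_cast hn
  have hh0 : 0 < D / n := div_pos hD hn0
  intro v w hvw
  rw [Function.onFun, Set.disjoint_left]
  intro y hyv hyw
  have hidx : ∀ i, idx v i = idx w i := by
    intro i
    by_contra hne
    have h1 := hyv i
    have h2 := hyw i
    rcases lt_or_gt_of_ne hne with hlt | hlt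
    · have hc : (idx v i : ℝ) + 1 ≤ (idx w i : ℝ) := by exact_mod_cast hlt
      nlinarith [h1.1, h1.2, h2.1, h2.2]
    · have hc : (idx w i : ℝ) + 1 ≤ (idx v i : ℝ) := by exact_mod_cast hlt
      nlinarith [h1.1, h1.2, h2.1, h2.2]
  apply hvw
  have e0 := hidx 0
  have e1 := hidx 1
  have e2 := hidx 2
  simp only [idx, Matrix.cons_val_zero, Matrix.cons_val_one, Matrix.head_cons] at e0 e1 e2
  have e2' : (v.2.2 : ℕ) = (w.2.2 : ℕ) := by
    simpa [idx] using hidx 2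
  exact Prod.ext (Fin.val_injective e0) (Prod.ext (Fin.val_injective e1) (Fin.val_injective e2'))

lemma box_subset_ball {D : ℝ} {n : ℕ} (hD : 0 < D) (hn : 1 ≤ n)
    (v : Fin (2 * n) × Fin (2 * n) × Fin (2 * n)) {y : E3} (hy : y ∈ box D n v) :
    ‖y - midpt D n v‖ ≤ D / n := by
  have hn0 : (0:ℝ) < n := by exact_mod_cast hn
  have hh0 : 0 < D / n := div_pos hD hn0
  have h1 : ∀ i, |(y - midpt D n v) i| ≤ (D / n) / 2 := by
    intro i
    have h2 := hy i
    have h3 : (y - midpt D n v) i = y i - midpt D n v i := rfl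
    rw [h3, midpt_coord D n v i, abs_le]
    constructor
    · nlinarith [h2.1]
    · nlinarith [h2.2]
  have := norm_le_two_mul (y - midpt D n v) (by positivity) h1
  linarith

lemma icoCube_subset_cube (D : ℝ) : icoCube D ⊆ cube D :=
  fun _ hy i => ⟨(hy i).1, (hy i).2.le⟩

lemma cube_ae_icoCube {D : ℝ} (hD : 0 < D) :
    (cube D : Set E3) =ᵐ[volume] icoCube D := by
  rw [MeasureTheory.ae_eq_set]
  constructor
  · refine measure_mono_null ?_ (measure_iUnion_null fun i => volume_hyper i D)
    · intro y hy
      obtain ⟨hc, hni⟩ := hy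
      rw [icoCube, Set.mem_setOf_eq] at hni
      push_neg at hni
      obtain ⟨i, hi⟩ := hni
      have h1 := hc i
      rw [Set.mem_Ico] at hi
      refine Set.mem_iUnion.2 ⟨i, ?_⟩
      have h5 : ¬ y i < D := fun hlt => hi ⟨h1.1, hlt⟩
      exact le_antisymm h1.2 (not_lt.1 h5)
  · rw [Set.diff_eq_empty.2 (icoCube_subset_cube D)]
    exact measure_empty

end Stmt2


set_option maxHeartbeats 2000000 in
theorem stmt2 :
    ∃ C : ℝ, 0 < C ∧ ∀ D : ℝ, 0 < D → ∀ n : ℕ, 1 ≤ n →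
      ∀ x : EuclideanSpace ℝ (Fin 3),
        (∀ v : Fin (2 * n) × Fin (2 * n) × Fin (2 * n),
          x ∉ Metric.ball (midpt D n v) (D / (n : ℝ) ^ 2)) →
        |(∑ v : Fin (2 * n) × Fin (2 * n) × Fin (2 * n),
            (D / n) ^ 3 / ‖x - midpt D n v‖) - ∫ y in cube D, ‖x - y‖⁻¹|
          ≤ C * D ^ 2 / n := by
  classical
  refine ⟨8000, by norm_num, ?_⟩
  intro D hD n hn x hx
  have hn0 : (0:ℝ) < n := by exact_mod_cast hn
  have hn1 : (1:ℝ) ≤ n := by exact_mod_cast hn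
  have hh0 : 0 < D / n := div_pos hD hn0
  -- distance lower bounds
  have hd : ∀ v, D / (n:ℝ) ^ 2 ≤ ‖x - midpt D n v‖ := by
    intro v
    have h1 := hx v
    rw [Metric.mem_ball, not_lt, dist_eq_norm] at h1
    exact h1
  have hdn2 : 0 < D / (n:ℝ) ^ 2 := by positivity
  have hd0 : ∀ v, 0 < ‖x - midpt D n v‖ := fun v => lt_of_lt_of_le hdn2 (hd v)
  -- master ball
  have hR00 : 0 < ‖x‖ + 3 * D := by positivity
  have hcube_sub : cube D ⊆ Metric.closedBall x (‖x‖ + 3 * D) := by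
    intro y hy
    rw [Metric.mem_closedBall, dist_eq_norm]
    have hyn : ‖y‖ ≤ 2 * D :=
      Stmt2.norm_le_two_mul y hD.le (fun i => abs_le.2 ⟨(hy i).1, (hy i).2⟩)
    calc ‖y - x‖ ≤ ‖y‖ + ‖x‖ := norm_sub_le y x
    _ ≤ ‖x‖ + 3 * D := by linarith
  have hico_sub : Stmt2.icoCube D ⊆ Metric.closedBall x (‖x‖ + 3 * D) :=
    (Stmt2.icoCube_subset_cube D).trans hcube_sub
  have hUnion := Stmt2.iUnion_box (D := D) (n := n) hD hn
  have hbox_sub : ∀ v, Stmt2.box D n v ⊆ Metric.closedBall x (‖x‖ + 3 * D) := by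
    intro v y hy
    exact hico_sub (hUnion ▸ Set.mem_iUnion.2 ⟨v, hy⟩)
  have hbox_meas : ∀ v, MeasurableSet (Stmt2.box D n v) := fun v => Stmt2.box_measurableSet D n v
  have hdisj := Stmt2.box_disjoint (D := D) (n := n) hD hn
  -- integrability
  have hInt1R0 : IntegrableOn (fun y => ‖x - y‖⁻¹) (Metric.closedBall x (‖x‖ + 3 * D)) := by
    have := Stmt2.integrableOn_inv_pow x 1 le_rfl (by norm_num) hR00 (subset_refl _)
    simpa using this
  have hInt2R0 : IntegrableOn (fun y => (‖x - y‖ ^ 2)⁻¹) (Metric.closedBall x (‖x‖ + 3 * D)) :=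
    Stmt2.integrableOn_inv_pow x 2 one_le_two (by norm_num) hR00 (subset_refl _)
  have hIntU1 : IntegrableOn (fun y => ‖x - y‖⁻¹) (⋃ v, Stmt2.box D n v) := by
    rw [hUnion]; exact hInt1R0.mono_set hico_sub
  have hIntU2 : IntegrableOn (fun y => (‖x - y‖ ^ 2)⁻¹) (⋃ v, Stmt2.box D n v) := by
    rw [hUnion]; exact hInt2R0.mono_set hico_sub
  -- decomposition of the integral
  have hsplit : ∫ y in cube D, ‖x - y‖⁻¹
      = ∑ v : Fin (2 * n) × Fin (2 * n) × Fin (2 * n), ∫ y in Stmt2.box D n v, ‖x - y‖⁻¹ := by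
    rw [setIntegral_congr_set (Stmt2.cube_ae_icoCube hD), ← hUnion,
      integral_iUnion hbox_meas hdisj hIntU1, tsum_fintype]
  rw [hsplit, ← Finset.sum_sub_distrib]
  refine le_trans (Finset.abs_sum_le_sum_abs _ _) ?_
  rw [← Finset.sum_filter_add_sum_filter_not Finset.univ
    (fun v => ‖x - midpt D n v‖ < 2 * (D / n))]
  -- nonnegativity of box integrals
  have hJ0 : ∀ v, 0 ≤ ∫ y in Stmt2.box D n v, (‖x - y‖ ^ 2)⁻¹ :=
    fun v => setIntegral_nonneg (hbox_meas v) (fun y _ => by positivity)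
  have hI0 : ∀ v, 0 ≤ ∫ y in Stmt2.box D n v, ‖x - y‖⁻¹ :=
    fun v => setIntegral_nonneg (hbox_meas v) (fun y _ => by positivity)
  -- NEAR boxes
  have hnear : ∀ v ∈ Finset.univ.filter (fun v => ‖x - midpt D n v‖ < 2 * (D / n)),
      |(D / n) ^ 3 / ‖x - midpt D n v‖ - ∫ y in Stmt2.box D n v, ‖x - y‖⁻¹|
        ≤ 109 * (D ^ 2 / n) := by
    intro v hv
    rw [Finset.mem_filter] at hv
    have hdv := hv.2
    have hterm : (D / n) ^ 3 / ‖x - midpt D n v‖ ≤ D ^ 2 / n := by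
      have hcalc : (D / n) ^ 3 / (D / (n:ℝ) ^ 2) = D ^ 2 / n := by
        field_simp
      calc (D / n) ^ 3 / ‖x - midpt D n v‖ ≤ (D / n) ^ 3 / (D / (n:ℝ) ^ 2) :=
            div_le_div_of_nonneg_left (by positivity) hdn2 (hd v)
      _ = D ^ 2 / n := hcalc
    have hIv_le : ∫ y in Stmt2.box D n v, ‖x - y‖⁻¹ ≤ 108 * (D ^ 2 / n) := by
      have hb_sub : Stmt2.box D n v ⊆ Metric.closedBall x (3 * (D / n)) := by
        intro y hy
        rw [Metric.mem_closedBall]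
        calc dist y x ≤ dist y (midpt D n v) + dist (midpt D n v) x := dist_triangle _ _ _
        _ ≤ D / n + 2 * (D / n) := by
            apply add_le_add
            · rw [dist_eq_norm]; exact Stmt2.box_subset_ball hD hn v hy
            · rw [dist_comm, dist_eq_norm]; exact hdv.le
        _ = 3 * (D / n) := by ring
      have hmono := setIntegral_mono_set
        (hInt1R0.mono_set (Metric.closedBall_subset_closedBall
          (by
            have hDn : D / n ≤ D := by
              rw [div_le_iff₀ hn0]; nlinarith
            have := norm_nonneg x
            linarith) : Metric.closedBall x (3 * (D / n)) ⊆ Metric.closedBall x (‖x‖ + 3 * D)))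
        (Filter.Eventually.of_forall (fun y => by positivity))
        (HasSubset.Subset.eventuallyLE hb_sub)
      refine le_trans hmono ?_
      refine le_trans (Stmt2.setIntegral_inv_norm_le x (by positivity)) ?_
      have hsq : (D / n) ^ 2 ≤ D ^ 2 / n := by
        rw [div_pow]
        apply div_le_div_of_nonneg_left (by positivity) hn0
        nlinarith
      nlinarith
    calc |(D / n) ^ 3 / ‖x - midpt D n v‖ - ∫ y in Stmt2.box D n v, ‖x - y‖⁻¹|
        ≤ |(D / n) ^ 3 / ‖x - midpt D n v‖| + |∫ y in Stmt2.box D n v, ‖x - y‖⁻¹| :=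
          abs_sub _ _
    _ = (D / n) ^ 3 / ‖x - midpt D n v‖ + ∫ y in Stmt2.box D n v, ‖x - y‖⁻¹ := by
          rw [abs_of_nonneg (by positivity), abs_of_nonneg (hI0 v)]
    _ ≤ D ^ 2 / n + 108 * (D ^ 2 / n) := add_le_add hterm hIv_le
    _ = 109 * (D ^ 2 / n) := by ring
  -- counting near boxes
  have hcard : (Finset.univ.filter
      (fun v : Fin (2 * n) × Fin (2 * n) × Fin (2 * n) => ‖x - midpt D n v‖ < 2 * (D / n))).card
      ≤ 64 := by
    set S : Fin 3 → Finset (Fin (2 * n)) := fun i =>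
      Finset.univ.filter (fun m : Fin (2 * n) =>
        |((m : ℕ) - (n : ℝ) + 1 / 2) * (D / n) - x i| < 2 * (D / n)) with hS_def
    have hScard : ∀ i, (S i).card ≤ 4 := by
      intro i
      by_cases hS : (S i).Nonempty
      · set m0 := (S i).min' hS with hm0_def
        have hm0 : m0 ∈ S i := (S i).min'_mem hS
        have hsub2 : (S i).image Fin.val ⊆ Finset.Icc (m0 : ℕ) ((m0 : ℕ) + 3) := by
          intro a ha
          rw [Finset.mem_image] at ha
          obtain ⟨m, hm, rfl⟩ := ha
          have hle : (m0 : ℕ) ≤ (m : ℕ) := (S i).min'_le m hm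
          rw [Finset.mem_Icc]
          refine ⟨hle, ?_⟩
          rw [hS_def, Finset.mem_filter] at hm hm0
          have h1 := hm.2
          have h2 := hm0.2
          have h3 : ((m : ℕ) - (m0 : ℕ) : ℝ) * (D / n) < 4 * (D / n) := by
            have h4 : (((m : ℕ) : ℝ) - (n : ℝ) + 1 / 2) * (D / n)
                - (((m0 : ℕ) : ℝ) - (n : ℝ) + 1 / 2) * (D / n)
                = (((m : ℕ) : ℝ) - ((m0 : ℕ) : ℝ)) * (D / n) := by ring
            calc (((m : ℕ) : ℝ) - ((m0 : ℕ) : ℝ)) * (D / n)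
                ≤ |(((m : ℕ) : ℝ) - ((m0 : ℕ) : ℝ)) * (D / n)| := le_abs_self _
            _ = |((((m : ℕ) : ℝ) - (n : ℝ) + 1 / 2) * (D / n) - x i)
                - ((((m0 : ℕ) : ℝ) - (n : ℝ) + 1 / 2) * (D / n) - x i)| := by
                rw [← h4]; ring_nf
            _ ≤ |(((m : ℕ) : ℝ) - (n : ℝ) + 1 / 2) * (D / n) - x i|
                + |(((m0 : ℕ) : ℝ) - (n : ℝ) + 1 / 2) * (D / n) - x i| := abs_sub _ _
            _ < 2 * (D / n) + 2 * (D / n) := add_lt_add h1 h2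
            _ = 4 * (D / n) := by ring
          have h5 : ((m : ℕ) : ℝ) - ((m0 : ℕ) : ℝ) < 4 :=
            lt_of_mul_lt_mul_right (by linarith [h3]) hh0.le
          have h6 : ((m : ℕ) : ℝ) < ((m0 : ℕ) : ℝ) + 4 := by linarith
          have h7 : (m : ℕ) < (m0 : ℕ) + 4 := by exact_mod_cast h6
          omega
        have hcard_eq : (S i).card = ((S i).image Fin.val).card :=
          (Finset.card_image_of_injective _ Fin.val_injective).symm
        rw [hcard_eq]
        refine le_trans (Finset.card_le_card hsub2) ?_
        rw [Nat.card_Icc]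
        omega
      · rw [Finset.not_nonempty_iff_eq_empty] at hS
        rw [hS]
        norm_num
    have hsubN : Finset.univ.filter
        (fun v : Fin (2 * n) × Fin (2 * n) × Fin (2 * n) => ‖x - midpt D n v‖ < 2 * (D / n))
        ⊆ S 0 ×ˢ (S 1 ×ˢ S 2) := by
      intro v hv
      rw [Finset.mem_filter] at hv
      have hcoord : ∀ i : Fin 3, |((Stmt2.idx v i : ℕ) - (n : ℝ) + 1 / 2) * (D / n) - x i|
          < 2 * (D / n) := by
        intro i
        have h1 : |(x - midpt D n v) i| ≤ ‖x - midpt D n v‖ := Stmt2.coord_abs_le_norm _ i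
        have h2 : (x - midpt D n v) i = x i - midpt D n v i := rfl
        rw [h2, Stmt2.midpt_coord D n v i] at h1
        rw [abs_sub_comm]
        exact lt_of_le_of_lt h1 hv.2
      rw [Finset.mem_product, Finset.mem_product]
      refine ⟨?_, ?_, ?_⟩
      · rw [hS_def, Finset.mem_filter]
        exact ⟨Finset.mem_univ _, hcoord 0⟩
      · rw [hS_def, Finset.mem_filter]
        exact ⟨Finset.mem_univ _, hcoord 1⟩
      · rw [hS_def, Finset.mem_filter]
        exact ⟨Finset.mem_univ _, hcoord 2⟩
    refine le_trans (Finset.card_le_card hsubN) ?_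
    rw [Finset.card_product, Finset.card_product]
    calc (S 0).card * ((S 1).card * (S 2).card) ≤ 4 * (4 * 4) := by
          exact Nat.mul_le_mul (hScard 0) (Nat.mul_le_mul (hScard 1) (hScard 2))
    _ = 64 := by norm_num
  have hnear_sum : ∑ v ∈ Finset.univ.filter
      (fun v => ‖x - midpt D n v‖ < 2 * (D / n)),
      |(D / n) ^ 3 / ‖x - midpt D n v‖ - ∫ y in Stmt2.box D n v, ‖x - y‖⁻¹|
      ≤ 64 * (109 * (D ^ 2 / n)) := by
    refine le_trans (Finset.sum_le_card_nsmul _ _ (109 * (D ^ 2 / n)) hnear) ?_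
    rw [nsmul_eq_mul]
    have hc : ((Finset.univ.filter
        (fun v : Fin (2 * n) × Fin (2 * n) × Fin (2 * n) =>
          ‖x - midpt D n v‖ < 2 * (D / n))).card : ℝ) ≤ 64 := by exact_mod_cast hcard
    have hpos : (0:ℝ) ≤ 109 * (D ^ 2 / n) := by positivity
    exact mul_le_mul_of_nonneg_right hc hpos
  -- FAR boxes
  have hfar : ∀ v ∈ Finset.univ.filter
      (fun v : Fin (2 * n) × Fin (2 * n) × Fin (2 * n) =>
        ¬ ‖x - midpt D n v‖ < 2 * (D / n)),
      |(D / n) ^ 3 / ‖x - midpt D n v‖ - ∫ y in Stmt2.box D n v, ‖x - y‖⁻¹|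
        ≤ 3 / 2 * (D / n) * ∫ y in Stmt2.box D n v, (‖x - y‖ ^ 2)⁻¹ := by
    intro v hv
    rw [Finset.mem_filter, not_lt] at hv
    have hd2h : 2 * (D / n) ≤ ‖x - midpt D n v‖ := hv.2
    have hIbox : IntegrableOn (fun y => ‖x - y‖⁻¹) (Stmt2.box D n v) :=
      hInt1R0.mono_set (hbox_sub v)
    have hIbox2 : IntegrableOn (fun y => (‖x - y‖ ^ 2)⁻¹) (Stmt2.box D n v) :=
      hInt2R0.mono_set (hbox_sub v)
    have hvolbox : volume (Stmt2.box D n v) < ⊤ := by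
      rw [Stmt2.volume_box hD hn v]
      exact ENNReal.pow_lt_top ENNReal.ofReal_lt_top
    have hconst_int : IntegrableOn (fun _ : EuclideanSpace ℝ (Fin 3) => ‖x - midpt D n v‖⁻¹)
        (Stmt2.box D n v) := integrableOn_const hvolbox.ne
    have hconst : ∫ _y in Stmt2.box D n v, ‖x - midpt D n v‖⁻¹
        = (D / n) ^ 3 * ‖x - midpt D n v‖⁻¹ := by
      rw [setIntegral_const, measureReal_def, Stmt2.volume_box_toReal hD hn v, smul_eq_mul]
    have hsub_int : (D / n) ^ 3 / ‖x - midpt D n v‖ - ∫ y in Stmt2.box D n v, ‖x - y‖⁻¹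
        = ∫ y in Stmt2.box D n v, (‖x - midpt D n v‖⁻¹ - ‖x - y‖⁻¹) := by
      rw [integral_sub hconst_int hIbox, hconst, div_eq_mul_inv]
    rw [hsub_int]
    have habs : |∫ y in Stmt2.box D n v, (‖x - midpt D n v‖⁻¹ - ‖x - y‖⁻¹)|
        ≤ ∫ y in Stmt2.box D n v, |‖x - midpt D n v‖⁻¹ - ‖x - y‖⁻¹| := by
      have := norm_integral_le_integral_norm (μ := volume.restrict (Stmt2.box D n v))
        (f := fun y => ‖x - midpt D n v‖⁻¹ - ‖x - y‖⁻¹)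
      simpa [Real.norm_eq_abs] using this
    refine le_trans habs ?_
    have hptwise : ∀ y ∈ Stmt2.box D n v,
        |‖x - midpt D n v‖⁻¹ - ‖x - y‖⁻¹| ≤ 3 / 2 * (D / n) * (‖x - y‖ ^ 2)⁻¹ := by
      intro y hy
      have h1 : ‖y - midpt D n v‖ ≤ D / n := Stmt2.box_subset_ball hD hn v hy
      have h2 : |‖x - midpt D n v‖ - ‖x - y‖| ≤ D / n := by
        have h3 := abs_norm_sub_norm_le (x - midpt D n v) (x - y)
        rw [show x - midpt D n v - (x - y) = y - midpt D n v by abel] at h3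
        exact le_trans h3 h1
      have h4 := (abs_le.1 h2).1
      have h5 := (abs_le.1 h2).2
      have hb_lb : D / n ≤ ‖x - y‖ := by linarith
      have hb0 : 0 < ‖x - y‖ := lt_of_lt_of_le hh0 hb_lb
      have hb_ub : ‖x - y‖ ≤ 3 / 2 * ‖x - midpt D n v‖ := by linarith
      rw [inv_sub_inv (ne_of_gt (hd0 v)) (ne_of_gt hb0), abs_div,
        abs_of_pos (mul_pos (hd0 v) hb0)]
      have hnum : |‖x - y‖ - ‖x - midpt D n v‖| ≤ D / n := by rw [abs_sub_comm]; exact h2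
      calc |‖x - y‖ - ‖x - midpt D n v‖| / (‖x - midpt D n v‖ * ‖x - y‖)
          ≤ (D / n) / (‖x - midpt D n v‖ * ‖x - y‖) :=
            div_le_div₀ hh0.le hnum (mul_pos (hd0 v) hb0) le_rfl
      _ ≤ 3 / 2 * (D / n) * (‖x - y‖ ^ 2)⁻¹ := by
            have hdb : 2 / 3 * (‖x - y‖ * ‖x - y‖) ≤ ‖x - midpt D n v‖ * ‖x - y‖ := by
              nlinarith
            calc (D / n) / (‖x - midpt D n v‖ * ‖x - y‖)
                ≤ (D / n) / (2 / 3 * (‖x - y‖ * ‖x - y‖)) :=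
                  div_le_div_of_nonneg_left hh0.le (by positivity) hdb
            _ = 3 / 2 * (D / n) * (‖x - y‖ ^ 2)⁻¹ := by
                field_simp
    have hmono2 := setIntegral_mono_on
      ((hconst_int.sub hIbox).abs)
      (hIbox2.const_mul (3 / 2 * (D / n)))
      (hbox_meas v) hptwise
    refine le_trans hmono2 ?_
    rw [integral_const_mul]
  -- bound on the square-inverse integral over the whole cube
  have hJico : ∫ y in Stmt2.icoCube D, (‖x - y‖ ^ 2)⁻¹ ≤ 32 * D := by
    have hico_meas := Stmt2.icoCube_measurableSet D
    have hIntD : IntegrableOn (fun y => (‖x - y‖ ^ 2)⁻¹) (Metric.closedBall x D) :=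
      Stmt2.integrableOn_inv_pow x 2 one_le_two (by norm_num) hD (subset_refl _)
    have hdisj2 : Disjoint (Stmt2.icoCube D ∩ Metric.closedBall x D)
        (Stmt2.icoCube D \ Metric.closedBall x D) :=
      Set.disjoint_left.2 fun y hy1 hy2 => hy2.2 hy1.2
    have hsplit2 : ∫ y in Stmt2.icoCube D, (‖x - y‖ ^ 2)⁻¹
        = (∫ y in Stmt2.icoCube D ∩ Metric.closedBall x D, (‖x - y‖ ^ 2)⁻¹)
          + ∫ y in Stmt2.icoCube D \ Metric.closedBall x D, (‖x - y‖ ^ 2)⁻¹ := by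
      rw [← setIntegral_union hdisj2 (hico_meas.diff Metric.isClosed_closedBall.measurableSet)
        (hInt2R0.mono_set (Set.inter_subset_left.trans hico_sub))
        (hInt2R0.mono_set (Set.diff_subset.trans hico_sub)),
        Set.inter_union_diff]
    rw [hsplit2]
    have hpart1 : ∫ y in Stmt2.icoCube D ∩ Metric.closedBall x D, (‖x - y‖ ^ 2)⁻¹ ≤ 24 * D := by
      refine le_trans (setIntegral_mono_set hIntD
        (Filter.Eventually.of_forall (fun y => by positivity))
        (HasSubset.Subset.eventuallyLE Set.inter_subset_right)) ?_
      exact Stmt2.setIntegral_inv_sq_le x hD.le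
    have hvol_ico : volume (Stmt2.icoCube D) = ENNReal.ofReal (2 * D) ^ 3 := by
      rw [show Stmt2.icoCube D = {y : EuclideanSpace ℝ (Fin 3) | ∀ i, y i ∈ Set.Ico (-D) D}
          from rfl, Stmt2.volume_coordSet _ (fun _ => measurableSet_Ico)]
      simp only [Real.volume_Ico]
      rw [Finset.prod_const, Finset.card_univ, Fintype.card_fin,
        show D - -D = 2 * D by ring]
    have hpart2 : ∫ y in Stmt2.icoCube D \ Metric.closedBall x D, (‖x - y‖ ^ 2)⁻¹ ≤ 8 * D := by
      have hvfin : volume (Stmt2.icoCube D \ Metric.closedBall x D) < ⊤ := by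
        refine lt_of_le_of_lt (measure_mono Set.diff_subset) ?_
        rw [hvol_ico]
        exact ENNReal.pow_lt_top ENNReal.ofReal_lt_top
      have hCbound : ∀ y ∈ Stmt2.icoCube D \ Metric.closedBall x D,
          ‖(‖x - y‖ ^ 2)⁻¹‖ ≤ (D ^ 2)⁻¹ := by
        intro y hy
        have h1 : D < dist y x := not_le.1 (fun hle => hy.2 (Metric.mem_closedBall.2 hle))
        rw [dist_eq_norm, norm_sub_rev] at h1
        rw [Real.norm_eq_abs, abs_of_nonneg (by positivity)]
        apply inv_anti₀ (by positivity)
        nlinarith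
      have hnorm := norm_setIntegral_le_of_norm_le_const hvfin hCbound
      have hvol_le : (volume (Stmt2.icoCube D \ Metric.closedBall x D)).toReal
          ≤ 8 * D ^ 3 := by
        have h1 : (volume (Stmt2.icoCube D \ Metric.closedBall x D)).toReal
            ≤ (volume (Stmt2.icoCube D)).toReal := by
          apply ENNReal.toReal_mono
          · rw [hvol_ico]; exact (ENNReal.pow_lt_top ENNReal.ofReal_lt_top).ne
          · exact measure_mono Set.diff_subset
        rw [hvol_ico, ENNReal.toReal_pow, ENNReal.toReal_ofReal (by positivity)] at h1
        nlinarith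
      calc ∫ y in Stmt2.icoCube D \ Metric.closedBall x D, (‖x - y‖ ^ 2)⁻¹
          ≤ ‖∫ y in Stmt2.icoCube D \ Metric.closedBall x D, (‖x - y‖ ^ 2)⁻¹‖ :=
            le_abs_self _
      _ ≤ (D ^ 2)⁻¹ * (volume (Stmt2.icoCube D \ Metric.closedBall x D)).toReal := hnorm
      _ ≤ (D ^ 2)⁻¹ * (8 * D ^ 3) := by
            apply mul_le_mul_of_nonneg_left hvol_le (by positivity)
      _ = 8 * D := by field_simp
    linarith
  have hfar_sum : ∑ v ∈ Finset.univ.filter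
      (fun v : Fin (2 * n) × Fin (2 * n) × Fin (2 * n) =>
        ¬ ‖x - midpt D n v‖ < 2 * (D / n)),
      |(D / n) ^ 3 / ‖x - midpt D n v‖ - ∫ y in Stmt2.box D n v, ‖x - y‖⁻¹|
      ≤ 3 / 2 * (D / n) * (32 * D) := by
    refine le_trans (Finset.sum_le_sum hfar) ?_
    rw [← Finset.mul_sum]
    apply mul_le_mul_of_nonneg_left _ (by positivity)
    calc ∑ v ∈ (Finset.univ.filter
        (fun v : Fin (2 * n) × Fin (2 * n) × Fin (2 * n) =>
          ¬ ‖x - midpt D n v‖ < 2 * (D / n))),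
        ∫ y in Stmt2.box D n v, (‖x - y‖ ^ 2)⁻¹
        ≤ ∑ v : Fin (2 * n) × Fin (2 * n) × Fin (2 * n),
          ∫ y in Stmt2.box D n v, (‖x - y‖ ^ 2)⁻¹ :=
          Finset.sum_le_sum_of_subset_of_nonneg (Finset.filter_subset _ _)
            (fun v _ _ => hJ0 v)
    _ = ∫ y in Stmt2.icoCube D, (‖x - y‖ ^ 2)⁻¹ := by
          rw [← tsum_fintype (L := SummationFilter.unconditional _), ← integral_iUnion hbox_meas hdisj hIntU2, hUnion]
    _ ≤ 32 * D := hJico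
  calc (∑ v ∈ Finset.univ.filter
        (fun v => ‖x - midpt D n v‖ < 2 * (D / n)),
        |(D / n) ^ 3 / ‖x - midpt D n v‖ - ∫ y in Stmt2.box D n v, ‖x - y‖⁻¹|)
      + ∑ v ∈ Finset.univ.filter
        (fun v : Fin (2 * n) × Fin (2 * n) × Fin (2 * n) =>
          ¬ ‖x - midpt D n v‖ < 2 * (D / n)),
        |(D / n) ^ 3 / ‖x - midpt D n v‖ - ∫ y in Stmt2.box D n v, ‖x - y‖⁻¹|
      ≤ 64 * (109 * (D ^ 2 / n)) + 3 / 2 * (D / n) * (32 * D) :=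
        add_le_add hnear_sum hfar_sum
  _ = 7024 * (D ^ 2 / n) := by ring
  _ ≤ 8000 * D ^ 2 / n := by
      rw [mul_div_assoc]
      apply mul_le_mul_of_nonneg_right (by norm_num) (by positivity)
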